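/- Let M₀ ∈ ℂ. The following are equivalent: (i) there exist positive constants C, M, R such that |τ + M₀ q(ξ)| ≥ C|(τ,ξ)|^{-M} for all (τ,ξ) ∈ ℤ × ℤⁿ with |τ|+|ξ| ≥ R; (ii) there exist positive constants C', M', R' such that |1 - e^{±2πi M₀ q(ξ)}| ≥ C'|ξ|^{-M'} for all ξ ∈ ℤⁿ with |ξ| ≥ R'. Here q : ℤⁿ → ℂ is a fixed symbol with |q(ξ)| ≤ K|ξ|^ν for some K, ν > 0. -/

import Mathlib

open scoped BigOperators

/-- Euclidean norm of `ξ ∈ ℤⁿ`. -/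
noncomputable def znorm {n : ℕ} (ξ : Fin n → ℤ) : ℝ :=
  Real.sqrt (∑ i, ((ξ i : ℝ)) ^ 2)

/-- Euclidean norm of `(τ, ξ) ∈ ℤ × ℤⁿ`. -/
noncomputable def pairNorm {n : ℕ} (τ : ℤ) (ξ : Fin n → ℤ) : ℝ :=
  Real.sqrt ((τ : ℝ) ^ 2 + ∑ i, ((ξ i : ℝ)) ^ 2)



/-- Antitonicity of `x ↦ x ^ (-m)` for `m ≥ 0`. -/
lemma rpow_neg_antitone {x y m : ℝ} (hx : 0 < x) (hxy : x ≤ y) (hm : 0 ≤ m) :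
    y ^ (-m) ≤ x ^ (-m) := by
  rw [Real.rpow_neg hx.le, Real.rpow_neg (hx.trans_le hxy).le]
  exact inv_anti₀ (Real.rpow_pos_of_pos hx m) (Real.rpow_le_rpow hx.le hxy hm)
set_option linter.deprecated false

/-- `|1 - exp u| ≥ exp(-π)|u|` squared, for real `|u| ≤ π`. -/
lemma aux_re (u : ℝ) (hu : |u| ≤ Real.pi) :
    (Real.exp (-Real.pi)) ^ 2 * u ^ 2 ≤ (1 - Real.exp u) ^ 2 := by
  obtain ⟨hl, hr⟩ := abs_le.mp hu
  have key : Real.exp (-Real.pi) * |u| ≤ |1 - Real.exp u| := by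
    rcases le_or_gt 0 u with h0 | h0
    · have e1 : u + 1 ≤ Real.exp u := Real.add_one_le_exp u
      have e2 : Real.exp (-Real.pi) ≤ 1 := Real.exp_le_one_iff.mpr (neg_nonpos.mpr Real.pi_pos.le)
      rw [abs_of_nonneg h0, abs_of_nonpos (by linarith)]
      nlinarith [Real.exp_pos (-Real.pi)]
    · have e1 : -u + 1 ≤ Real.exp (-u) := Real.add_one_le_exp (-u)
      have e3 : Real.exp (-Real.pi) ≤ Real.exp u := Real.exp_le_exp.mpr hl
      have e4 : Real.exp u * Real.exp (-u) = 1 := by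
        rw [← Real.exp_add]; simp
      rw [abs_of_neg h0, abs_of_nonneg]
      · nlinarith [Real.exp_pos u]
      · nlinarith [Real.exp_pos u]
  have hsq := pow_le_pow_left₀ (by positivity) key 2
  calc (Real.exp (-Real.pi)) ^ 2 * u ^ 2
      = (Real.exp (-Real.pi) * |u|) ^ 2 := by rw [mul_pow, sq_abs]
    _ ≤ |1 - Real.exp u| ^ 2 := hsq
    _ = (1 - Real.exp u) ^ 2 := sq_abs _

/-- quadratic lower bound for `2 e^u (1 - cos v)`. -/
lemma aux_im (v u : ℝ) (hv : |v| ≤ Real.pi) (hu : -Real.pi ≤ u) :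
    (Real.exp (-Real.pi)) ^ 2 * v ^ 2 ≤ 2 * Real.exp u * (1 - Real.cos v) := by
  have hc : Real.cos v ≤ 1 - 2 / Real.pi ^ 2 * v ^ 2 := Real.cos_le_one_sub_mul_cos_sq hv
  have he : Real.exp (-Real.pi) ≤ Real.exp u := Real.exp_le_exp.mpr hu
  have hpi : (3:ℝ) < Real.pi := Real.pi_gt_three
  have hpi4 : Real.pi ≤ 4 := Real.pi_le_four
  have h4 : (4:ℝ) ≤ Real.exp Real.pi := by
    nlinarith [Real.add_one_le_exp Real.pi]
  have hmul : Real.exp (-Real.pi) * Real.exp Real.pi = 1 := by rw [← Real.exp_add]; simp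
  have ha4 : Real.exp (-Real.pi) ≤ 1/4 := by
    nlinarith [Real.exp_pos (-Real.pi)]
  have hp2 : Real.pi ^ 2 ≤ 16 := by nlinarith
  -- 2 e^u (1-cos v) ≥ 2 e^{-π} (2/π²) v² ≥ e^{-2π} v²
  have h1 : 2 / Real.pi ^ 2 * v ^ 2 ≤ 1 - Real.cos v := by linarith
  have hpp : (0:ℝ) < Real.pi ^ 2 := by positivity
  have h2 : 2 * Real.exp (-Real.pi) * (2 / Real.pi ^ 2 * v ^ 2) ≤ 2 * Real.exp u * (1 - Real.cos v) := by
    have hv2 : (0:ℝ) ≤ 2 / Real.pi ^ 2 * v ^ 2 := by positivity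
    have t1 := mul_le_mul_of_nonneg_left h1 (le_of_lt (Real.exp_pos u))
    have t2 := mul_le_mul_of_nonneg_right he hv2
    nlinarith [Real.exp_pos (-Real.pi)]
  refine le_trans ?_ h2
  rw [div_mul_eq_mul_div, mul_div_assoc', le_div_iff₀ hpp]
  have ha0 : (0:ℝ) ≤ Real.exp (-Real.pi) := (Real.exp_pos _).le
  have hb : Real.exp (-Real.pi) * Real.pi ^ 2 ≤ 4 := by nlinarith
  nlinarith [mul_nonneg ha0 (sq_nonneg v), sq_nonneg v]

/-- Key lower bound: `|1 - e^w| ≥ e^{-π}|w|` when `|Re w|, |Im w| ≤ π`. -/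
lemma one_sub_exp_lower (w : ℂ) (h1 : |w.re| ≤ Real.pi) (h2 : |w.im| ≤ Real.pi) :
    Real.exp (-Real.pi) * ‖w‖ ≤ ‖1 - Complex.exp w‖ := by
  have hW : (‖w‖) ^ 2 = w.re ^ 2 + w.im ^ 2 := by
    rw [Complex.sq_norm, Complex.normSq_apply]; ring
  have hE : (‖1 - Complex.exp w‖) ^ 2
      = (1 - Real.exp w.re * Real.cos w.im) ^ 2 + (Real.exp w.re * Real.sin w.im) ^ 2 := by
    rw [Complex.sq_norm, Complex.normSq_apply]
    simp [Complex.exp_re, Complex.exp_im]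
    ring
  have a1 := aux_re w.re h1
  have a2 := aux_im w.im w.re h2 (abs_le.mp h1).1
  have hsc := Real.sin_sq_add_cos_sq w.im
  have hid : (1 - Real.exp w.re * Real.cos w.im) ^ 2 + (Real.exp w.re * Real.sin w.im) ^ 2
      = (1 - Real.exp w.re) ^ 2 + 2 * Real.exp w.re * (1 - Real.cos w.im) := by
    linear_combination (Real.exp w.re) ^ 2 * hsc
  have hsq : (Real.exp (-Real.pi) * ‖w‖) ^ 2 ≤ (‖1 - Complex.exp w‖) ^ 2 := by
    rw [mul_pow, hW, hE, hid]
    nlinarith [a1, a2]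
  have h0 : (0:ℝ) ≤ Real.exp (-Real.pi) * ‖w‖ := by positivity
  exact (pow_le_pow_iff_left₀ h0 (norm_nonneg _) two_ne_zero).mp hsq

/-- Upper bound `|1 - e^w| ≤ 2|w|` for `|w| ≤ 1`. -/
lemma one_sub_exp_upper (w : ℂ) (h : ‖w‖ ≤ 1) :
    ‖1 - Complex.exp w‖ ≤ 2 * ‖w‖ := by
  have := Complex.norm_exp_sub_one_le h
  rwa [show (1 : ℂ) - Complex.exp w = -(Complex.exp w - 1) by ring, norm_neg]

/-- `1/2 ≤ |1 - x|` if `|x| ≤ 1/2` or `2 ≤ |x|`. -/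
lemma half_le_one_sub (x : ℂ) (h : ‖x‖ ≤ 1/2 ∨ 2 ≤ ‖x‖) :
    1/2 ≤ ‖1 - x‖ := by
  rcases h with h | h
  · have h1 : (1:ℝ) - ‖x‖ ≤ ‖1 - x‖ := by
      have := norm_sub_norm_le (1 : ℂ) x
      rw [norm_one] at this
      exact this
    linarith
  · have h2 : ‖x‖ - 1 ≤ ‖1 - x‖ := by
      have := norm_sub_norm_le x (1 : ℂ)
      rw [norm_one, norm_sub_rev] at this
      exact this
    linarith


section helpers2

lemma znorm_nonneg' {n : ℕ} (ξ : Fin n → ℤ) : 0 ≤ znorm ξ := Real.sqrt_nonneg _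

lemma znorm_sq' {n : ℕ} (ξ : Fin n → ℤ) : znorm ξ ^ 2 = ∑ i, ((ξ i : ℝ)) ^ 2 :=
  Real.sq_sqrt (Finset.sum_nonneg fun i _ => sq_nonneg _)

lemma znorm_le_pairNorm {n : ℕ} (τ : ℤ) (ξ : Fin n → ℤ) : znorm ξ ≤ pairNorm τ ξ :=
  Real.sqrt_le_sqrt (le_add_of_nonneg_left (sq_nonneg _))

lemma abs_le_pairNorm {n : ℕ} (τ : ℤ) (ξ : Fin n → ℤ) : |(τ : ℝ)| ≤ pairNorm τ ξ := by
  rw [← Real.sqrt_sq_eq_abs]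
  exact Real.sqrt_le_sqrt (le_add_of_nonneg_right (Finset.sum_nonneg fun i _ => sq_nonneg _))

lemma pairNorm_le_add {n : ℕ} (τ : ℤ) (ξ : Fin n → ℤ) :
    pairNorm τ ξ ≤ |(τ : ℝ)| + znorm ξ := by
  have h1 : (τ : ℝ) ^ 2 + ∑ i, ((ξ i : ℝ)) ^ 2 ≤ (|(τ : ℝ)| + znorm ξ) ^ 2 := by
    have := znorm_sq' ξ
    have h2 : (0:ℝ) ≤ |(τ : ℝ)| * znorm ξ := mul_nonneg (abs_nonneg _) (znorm_nonneg' ξ)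
    nlinarith [sq_abs (τ : ℝ)]
  have := Real.sqrt_le_sqrt h1
  rwa [Real.sqrt_sq (add_nonneg (abs_nonneg _) (znorm_nonneg' ξ))] at this

lemma exp_neg_pi_facts : Real.exp (-Real.pi) ≤ 1/4 ∧ (4:ℝ) ≤ Real.exp Real.pi := by
  have hpi : (3:ℝ) < Real.pi := Real.pi_gt_three
  have h4 : (4:ℝ) ≤ Real.exp Real.pi := by nlinarith [Real.add_one_le_exp Real.pi]
  have hmul : Real.exp (-Real.pi) * Real.exp Real.pi = 1 := by rw [← Real.exp_add]; simp
  exact ⟨by nlinarith [Real.exp_pos (-Real.pi)], h4⟩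

/-- Both exponential bounds from distance to the nearest integer, when `|Im z| ≤ 1/2`. -/
lemma exp_bound_of_dist (z : ℂ) (k : ℤ) (him : |z.im| ≤ 1/2) (hre : |z.re - (k:ℝ)| ≤ 1/2) :
    Real.exp (-Real.pi) * (2*Real.pi) * ‖z - (k:ℂ)‖ ≤
      ‖1 - Complex.exp (((2 * Real.pi : ℝ) : ℂ) * Complex.I * z)‖ ∧
    Real.exp (-Real.pi) * (2*Real.pi) * ‖z - (k:ℂ)‖ ≤
      ‖1 - Complex.exp (-(((2 * Real.pi : ℝ) : ℂ) * Complex.I * z))‖ := by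
  have hpi := Real.pi_pos
  set w : ℂ := ((2 * Real.pi : ℝ) : ℂ) * Complex.I * (z - (k:ℂ)) with hw
  have hwre : w.re = -(2 * Real.pi * z.im) := by
    simp [hw, Complex.mul_re, Complex.mul_im, Complex.I_re, Complex.I_im,
      Complex.ofReal_re, Complex.ofReal_im, Complex.sub_re, Complex.sub_im,
      Complex.intCast_re, Complex.intCast_im]
  have hwim : w.im = 2 * Real.pi * (z.re - (k:ℝ)) := by
    simp [hw, Complex.mul_re, Complex.mul_im, Complex.I_re, Complex.I_im,
      Complex.ofReal_re, Complex.ofReal_im, Complex.sub_re, Complex.sub_im,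
      Complex.intCast_re, Complex.intCast_im]
  have hwreb : |w.re| ≤ Real.pi := by
    rw [hwre, abs_neg, abs_mul, abs_of_pos (by positivity : (0:ℝ) < 2*Real.pi)]
    nlinarith [abs_nonneg z.im]
  have hwimb : |w.im| ≤ Real.pi := by
    rw [hwim, abs_mul, abs_of_pos (by positivity : (0:ℝ) < 2*Real.pi)]
    nlinarith [abs_nonneg (z.re - (k:ℝ))]
  have hwabs : ‖w‖ = 2*Real.pi * ‖z - (k:ℂ)‖ := by
    rw [hw, norm_mul, norm_mul, Complex.norm_real, Real.norm_eq_abs, Complex.norm_I, mul_one,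
      abs_of_pos (by positivity : (0:ℝ) < 2*Real.pi)]
  -- plus sign
  have hexp1 : Complex.exp w = Complex.exp (((2 * Real.pi : ℝ) : ℂ) * Complex.I * z) := by
    have hsplit : w = ((2 * Real.pi : ℝ) : ℂ) * Complex.I * z
        + ((-k : ℤ) : ℂ) * (2 * (Real.pi : ℂ) * Complex.I) := by
      rw [hw]; push_cast; ring
    rw [hsplit, Complex.exp_add, Complex.exp_int_mul_two_pi_mul_I, mul_one]
  have h1 := one_sub_exp_lower w hwreb hwimb
  rw [hwabs, hexp1] at h1
  -- minus sign
  have hwre2 : (-w).re = -w.re := by simp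
  have hwim2 : (-w).im = -w.im := by simp
  have hexp2 : Complex.exp (-w) = Complex.exp (-(((2 * Real.pi : ℝ) : ℂ) * Complex.I * z)) := by
    have hsplit : -w = -(((2 * Real.pi : ℝ) : ℂ) * Complex.I * z)
        + ((k : ℤ) : ℂ) * (2 * (Real.pi : ℂ) * Complex.I) := by
      rw [hw]; push_cast; ring
    rw [hsplit, Complex.exp_add, Complex.exp_int_mul_two_pi_mul_I, mul_one]
  have h2 := one_sub_exp_lower (-w) (by rw [hwre2, abs_neg]; exact hwreb)
    (by rw [hwim2, abs_neg]; exact hwimb)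
  rw [norm_neg w, hwabs, hexp2] at h2
  constructor
  · calc Real.exp (-Real.pi) * (2*Real.pi) * ‖z - (k:ℂ)‖
        = Real.exp (-Real.pi) * (2*Real.pi * ‖z - (k:ℂ)‖) := by ring
      _ ≤ _ := h1
  · calc Real.exp (-Real.pi) * (2*Real.pi) * ‖z - (k:ℂ)‖
        = Real.exp (-Real.pi) * (2*Real.pi * ‖z - (k:ℂ)‖) := by ring
      _ ≤ _ := h2

end helpers2

set_option maxHeartbeats 1600000 in
/-- Equivalence (ii) ⟺ (iii) of Theorem 2(c): for a symbol `q` of polynomial growth,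
the Siegel condition `|τ + M₀q(ξ)| ≥ C|(τ,ξ)|^{-M}` holds iff the exponential condition
`|1 - e^{±2πiM₀q(ξ)}| ≥ C'|ξ|^{-M'}` holds. -/
theorem siegel_iff_exponential {n : ℕ} (M₀ : ℂ) (q : (Fin n → ℤ) → ℂ)
    (K ν : ℝ) (hK : 0 < K) (hν : 0 < ν)
    (hq : ∀ ξ, ‖q ξ‖ ≤ K * znorm ξ ^ ν) :
    (∃ C M R : ℝ, 0 < C ∧ 0 < M ∧ 0 < R ∧
      ∀ (τ : ℤ) (ξ : Fin n → ℤ), R ≤ |(τ : ℝ)| + znorm ξ →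
        C * pairNorm τ ξ ^ (-M) ≤ ‖(τ : ℂ) + M₀ * q ξ‖) ↔
    (∃ C' M' R' : ℝ, 0 < C' ∧ 0 < M' ∧ 0 < R' ∧
      ∀ ξ : Fin n → ℤ, R' ≤ znorm ξ →
        C' * znorm ξ ^ (-M') ≤
          ‖1 - Complex.exp (((2 * Real.pi : ℝ) : ℂ) * Complex.I * M₀ * q ξ)‖ ∧
        C' * znorm ξ ^ (-M') ≤
          ‖1 - Complex.exp (-(((2 * Real.pi : ℝ) : ℂ) * Complex.I * M₀ * q ξ))‖) := by
  have hpi := Real.pi_pos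
  have hpi3 : (3:ℝ) < Real.pi := Real.pi_gt_three
  obtain ⟨hq4, he4⟩ := exp_neg_pi_facts
  constructor
  · rintro ⟨C, M, R, hC, hM, hR, hsie⟩
    set D : ℝ := ‖M₀‖ * K + 2 with hD
    have hD0 : (0:ℝ) < D := by positivity
    refine ⟨min (1/2) (Real.exp (-Real.pi) * (2*Real.pi) * C * D ^ (-M)), (max ν 1) * M,
      max R 1, lt_min (by norm_num) (by positivity), by positivity,
      lt_of_lt_of_le one_pos (le_max_right R 1), ?_⟩
    intro ξ hξ
    set s := znorm ξ with hs
    set N : ℝ := max ν 1 with hN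
    have hs1 : (1:ℝ) ≤ s := le_trans (le_max_right R 1) hξ
    have hsR : R ≤ s := le_trans (le_max_left R 1) hξ
    set z : ℂ := M₀ * q ξ with hz
    have hzb : ‖z‖ ≤ ‖M₀‖ * K * s ^ ν := by
      rw [hz, norm_mul, mul_assoc]
      exact mul_le_mul_of_nonneg_left (hq ξ) (norm_nonneg M₀)
    have hsM' : s ^ (-(N*M)) ≤ 1 :=
      Real.rpow_le_one_of_one_le_of_nonpos hs1
        (neg_nonpos.mpr (mul_nonneg (le_trans zero_le_one (le_max_right ν 1)) hM.le))
    have hsM'0 : (0:ℝ) ≤ s ^ (-(N*M)) := Real.rpow_nonneg (by linarith) _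
    have hassoc : ((2 * Real.pi : ℝ) : ℂ) * Complex.I * M₀ * q ξ
        = ((2 * Real.pi : ℝ) : ℂ) * Complex.I * z := by rw [hz, mul_assoc]
    rcases le_or_gt (1/2) |z.im| with him | him
    · -- |Im z| large : both exponentials are far from 1
      have hhalf : min (1/2) (Real.exp (-Real.pi) * (2*Real.pi) * C * D ^ (-M)) * s ^ (-(N*M))
          ≤ 1/2 := by
        calc _ ≤ (1/2 : ℝ) * s ^ (-(N*M)) :=
              mul_le_mul_of_nonneg_right (min_le_left _ _) hsM'0
          _ ≤ (1/2 : ℝ) * 1 := by nlinarith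
          _ = 1/2 := mul_one _
      have hre1 : (((2 * Real.pi : ℝ) : ℂ) * Complex.I * z).re = -(2 * Real.pi * z.im) := by
        simp [Complex.mul_re, Complex.mul_im, Complex.I_re, Complex.I_im,
          Complex.ofReal_re, Complex.ofReal_im]
      have habs1 : ‖Complex.exp (((2 * Real.pi : ℝ) : ℂ) * Complex.I * z)‖
          = Real.exp (-(2 * Real.pi * z.im)) := by rw [Complex.norm_exp, hre1]
      have habs2 : ‖Complex.exp (-(((2 * Real.pi : ℝ) : ℂ) * Complex.I * z))‖
          = Real.exp (2 * Real.pi * z.im) := by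
        rw [Complex.norm_exp]
        simp only [Complex.neg_re, hre1, neg_neg]
      rcases le_or_gt (1/2) z.im with hzi | hzi
      · -- z.im ≥ 1/2
        have e1 : Real.exp (-(2 * Real.pi * z.im)) ≤ 1/2 := by
          have : -(2 * Real.pi * z.im) ≤ -Real.pi := by nlinarith
          linarith [Real.exp_le_exp.mpr this]
        have e2 : (2:ℝ) ≤ Real.exp (2 * Real.pi * z.im) := by
          have : Real.pi ≤ 2 * Real.pi * z.im := by nlinarith
          linarith [Real.exp_le_exp.mpr this]
        rw [hassoc]
        constructor
        · exact le_trans hhalf (half_le_one_sub _ (Or.inl (by rw [habs1]; exact e1)))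
        · exact le_trans hhalf (half_le_one_sub _ (Or.inr (by rw [habs2]; exact e2)))
      · -- z.im ≤ -1/2
        have hzi' : z.im ≤ -(1/2) := by
          rcases abs_cases z.im with ⟨h1, _⟩ | ⟨h1, _⟩ <;> linarith
        have e1 : (2:ℝ) ≤ Real.exp (-(2 * Real.pi * z.im)) := by
          have : Real.pi ≤ -(2 * Real.pi * z.im) := by nlinarith
          linarith [Real.exp_le_exp.mpr this]
        have e2 : Real.exp (2 * Real.pi * z.im) ≤ 1/2 := by
          have : 2 * Real.pi * z.im ≤ -Real.pi := by nlinarith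
          linarith [Real.exp_le_exp.mpr this]
        rw [hassoc]
        constructor
        · exact le_trans hhalf (half_le_one_sub _ (Or.inr (by rw [habs1]; exact e1)))
        · exact le_trans hhalf (half_le_one_sub _ (Or.inl (by rw [habs2]; exact e2)))
    · -- |Im z| small : use the Siegel condition with the nearest integer
      set k : ℤ := round z.re with hk
      have hround : |z.re - (k:ℝ)| ≤ 1/2 := abs_sub_round z.re
      have hsie' := hsie (-k) ξ (le_trans hsR (le_add_of_nonneg_left (abs_nonneg _)))
      have hcast : ((-k : ℤ) : ℂ) + M₀ * q ξ = z - (k:ℂ) := by rw [← hz]; push_cast; ring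
      rw [hcast] at hsie'
      set P := pairNorm (-k) ξ with hP
      have hsP : s ≤ P := znorm_le_pairNorm (-k) ξ
      have hP0 : (0:ℝ) < P := lt_of_lt_of_le (by linarith) hsP
      -- P ≤ D * s ^ N
      have hkb : |((-k : ℤ) : ℝ)| ≤ ‖M₀‖ * K * s ^ ν + 1/2 := by
        have t1 : |(k:ℝ)| - |z.re| ≤ |(k:ℝ) - z.re| := abs_sub_abs_le_abs_sub _ _
        have t2 : |(k:ℝ) - z.re| = |z.re - (k:ℝ)| := abs_sub_comm _ _
        have t3 : |z.re| ≤ ‖z‖ := Complex.abs_re_le_norm z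
        have t4 : ((-k : ℤ) : ℝ) = -(k:ℝ) := by push_cast; ring
        rw [t4, abs_neg]
        linarith
      have hsN : s ^ ν ≤ s ^ N := Real.rpow_le_rpow_of_exponent_le hs1 (le_max_left ν 1)
      have hsN1 : (1:ℝ) ≤ s ^ N := by
        have := Real.rpow_le_rpow_of_exponent_le hs1
          (le_trans zero_le_one (le_max_right ν 1) : (0:ℝ) ≤ N)
        rwa [Real.rpow_zero] at this
      have hsNs : s ≤ s ^ N := by
        have := Real.rpow_le_rpow_of_exponent_le hs1 (le_max_right ν 1)
        rwa [Real.rpow_one] at this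
      have hPle : P ≤ D * s ^ N := by
        have h1 : P ≤ |((-k : ℤ) : ℝ)| + s := pairNorm_le_add (-k) ξ
        have h2 : ‖M₀‖ * K * s ^ ν ≤ ‖M₀‖ * K * s ^ N :=
          mul_le_mul_of_nonneg_left hsN (by positivity)
        rw [hD]
        nlinarith
      have hPinv : (D * s ^ N) ^ (-M) ≤ P ^ (-M) := rpow_neg_antitone hP0 hPle hM.le
      have hsplit : (D * s ^ N) ^ (-M) = D ^ (-M) * s ^ (-(N*M)) := by
        rw [Real.mul_rpow hD0.le (Real.rpow_nonneg (by linarith) _),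
          ← Real.rpow_mul (by linarith : (0:ℝ) ≤ s), mul_neg]
      -- distance lower bound
      have hdist : C * D ^ (-M) * s ^ (-(N*M)) ≤ ‖z - (k:ℂ)‖ := by
        calc C * D ^ (-M) * s ^ (-(N*M)) = C * (D * s ^ N) ^ (-M) := by rw [hsplit]; ring
          _ ≤ C * P ^ (-M) := mul_le_mul_of_nonneg_left hPinv hC.le
          _ ≤ _ := hsie'
      obtain ⟨hb1, hb2⟩ := exp_bound_of_dist z k him.le hround
      have hchain : min (1/2) (Real.exp (-Real.pi) * (2*Real.pi) * C * D ^ (-M)) * s ^ (-(N*M))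
          ≤ Real.exp (-Real.pi) * (2*Real.pi) * ‖z - (k:ℂ)‖ := by
        calc _ ≤ (Real.exp (-Real.pi) * (2*Real.pi) * C * D ^ (-M)) * s ^ (-(N*M)) :=
              mul_le_mul_of_nonneg_right (min_le_right _ _) hsM'0
          _ = (Real.exp (-Real.pi) * (2*Real.pi)) * (C * D ^ (-M) * s ^ (-(N*M))) := by ring
          _ ≤ (Real.exp (-Real.pi) * (2*Real.pi)) * ‖z - (k:ℂ)‖ :=
              mul_le_mul_of_nonneg_left hdist (by positivity)
      rw [hassoc]
      exact ⟨le_trans hchain hb1, le_trans hchain hb2⟩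
  · rintro ⟨C', M', R', hC', hM', hR', hexp⟩
    set A : ℝ := ‖M₀‖ * K * R' ^ ν with hA
    have hA0 : (0:ℝ) ≤ A := by
      rw [hA]; positivity
    refine ⟨min (1/(2*Real.pi)) (C'/(4*Real.pi)), M', R' + A + 4,
      lt_min (by positivity) (by positivity), hM', by linarith, ?_⟩
    intro τ ξ hτξ
    set s := znorm ξ with hs
    set z : ℂ := M₀ * q ξ with hz
    set P := pairNorm τ ξ with hP
    set d := ‖(τ : ℂ) + M₀ * q ξ‖ with hd
    have hs0 : (0:ℝ) ≤ s := znorm_nonneg' ξ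
    have hsP : s ≤ P := znorm_le_pairNorm τ ξ
    have hτP : |(τ:ℝ)| ≤ P := abs_le_pairNorm τ ξ
    have hP2 : (2:ℝ) ≤ P := by
      have : |(τ:ℝ)| + s ≤ 2 * P := by linarith
      linarith
    have hPM : P ^ (-M') ≤ 1 := Real.rpow_le_one_of_one_le_of_nonpos (by linarith)
      (neg_nonpos.mpr hM'.le)
    have hPM0 : (0:ℝ) ≤ P ^ (-M') := Real.rpow_nonneg (by linarith) _
    rcases le_or_gt (1/(2*Real.pi)) d with hbig | hsmall
    · calc min (1/(2*Real.pi)) (C'/(4*Real.pi)) * P ^ (-M')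
          ≤ (1/(2*Real.pi)) * 1 :=
            mul_le_mul (min_le_left _ _) hPM hPM0 (by positivity)
        _ ≤ d := by rwa [mul_one]
    · -- d is small: τ must nearly cancel z, so |ξ| is large and we can use (ii)
      have hd0 : (0:ℝ) ≤ d := norm_nonneg _
      have hsR' : R' ≤ s := by
        by_contra hcon
        push_neg at hcon
        have hzb : ‖z‖ ≤ A := by
          rw [hz, hA, norm_mul, mul_assoc]
          refine mul_le_mul_of_nonneg_left (le_trans (hq ξ) ?_) (norm_nonneg M₀)
          exact mul_le_mul_of_nonneg_left
            (Real.rpow_le_rpow hs0 hcon.le hν.le) hK.le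
        have hτb : A + 4 - s ≤ |(τ:ℝ)| - s + s := by linarith
        have htri : |(τ:ℝ)| - ‖z‖ ≤ d := by
          have h1 := norm_sub_norm_le ((τ:ℂ)) (-z)
          rw [sub_neg_eq_add, norm_neg] at h1
          rw [Complex.norm_intCast] at h1
          exact h1
        have h1 : 1/(2*Real.pi) < 4 - s + s := by
          have : (0:ℝ) < 2*Real.pi := by positivity
          rw [sub_add_cancel]
          calc 1/(2*Real.pi) ≤ 1/2 := by
                rw [div_le_div_iff₀ this (by norm_num)]; nlinarith
            _ < 4 := by norm_num
        have : R' + A + 4 ≤ |(τ:ℝ)| + s := hτξ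
        have : A + 4 < |(τ:ℝ)| := by linarith
        linarith
      obtain ⟨hlow, -⟩ := hexp ξ hsR'
      -- rewrite the exponential through the integer shift τ
      set w : ℂ := ((2 * Real.pi : ℝ) : ℂ) * Complex.I * ((τ:ℂ) + z) with hw
      have hexpw : Complex.exp w = Complex.exp (((2 * Real.pi : ℝ) : ℂ) * Complex.I * M₀ * q ξ) := by
        have hsplit : w = ((2 * Real.pi : ℝ) : ℂ) * Complex.I * M₀ * q ξ
            + (τ : ℂ) * (2 * (Real.pi : ℂ) * Complex.I) := by
          rw [hw, hz]; push_cast; ring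
        rw [hsplit, Complex.exp_add]
        rw [show ((τ:ℂ) * (2 * (Real.pi:ℂ) * Complex.I)) = ((τ:ℤ):ℂ) * (2 * (Real.pi:ℂ) * Complex.I) by push_cast; ring,
          Complex.exp_int_mul_two_pi_mul_I, mul_one]
      have hwabs : ‖w‖ = 2 * Real.pi * d := by
        rw [hw, norm_mul, norm_mul, Complex.norm_real, Real.norm_eq_abs, Complex.norm_I, mul_one,
          abs_of_pos (by positivity : (0:ℝ) < 2*Real.pi), hd, hz]
      have hw1 : ‖w‖ ≤ 1 := by
        rw [hwabs]
        have h2π : (0:ℝ) < 2*Real.pi := by positivity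
        rw [lt_div_iff₀ h2π] at hsmall
        linarith [mul_comm d (2*Real.pi)]
      have hup := one_sub_exp_upper w hw1
      rw [hwabs, hexpw] at hup
      have hkey : C' * s ^ (-M') ≤ 2 * (2 * Real.pi * d) := le_trans hlow hup
      have hsinv : P ^ (-M') ≤ s ^ (-M') :=
        rpow_neg_antitone (by linarith) hsP hM'.le
      calc min (1/(2*Real.pi)) (C'/(4*Real.pi)) * P ^ (-M')
          ≤ (C'/(4*Real.pi)) * s ^ (-M') :=
            mul_le_mul (min_le_right _ _) hsinv hPM0 (by positivity)
        _ ≤ d := by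
            rw [div_mul_eq_mul_div, div_le_iff₀ (by positivity : (0:ℝ) < 4*Real.pi)]
            nlinarith
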